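/- On the secondary Hochschild chain complex C_n(A,B,ε) = A^{⊗(n+1)} ⊗ B^{⊗ n(n+1)/2}, the identity (1 − λ) ∘ b'_n = b_n ∘ (1 − λ) holds, where b is the full differential, b' is the truncated differential (omitting the last cyclic term), and λ is the signed cyclic operator. Hence b descends to a well-defined differential on the quotient C_n^λ(A,B,ε) = C_n(A,B,ε)/Im(1 − λ). -/

import Mathlib

open scoped TensorProduct
open MulOpposite PiTensorProduct

noncomputable section

/-- Index set for the strictly upper triangular positions of an `m × m` matrix. -/
abbrev UT (m : ℕ) := {p : Fin m × Fin m // p.1 < p.2}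

/-- The tensor space `A^{⊗ m} ⊗ B^{⊗ m(m-1)/2}` in its matrix representation. -/
def TS (k A B : Type) [Field k] [Ring A] [Algebra k A] [CommRing B] [Algebra k B]
    (m : ℕ) : Type :=
  (⨂[k] _ : Fin m, A) ⊗[k] (⨂[k] _ : UT m, B)

variable (k A B : Type) [Field k] [Ring A] [Algebra k A] [CommRing B] [Algebra k B]

instance (m : ℕ) : AddCommGroup (TS k A B m) :=
  inferInstanceAs (AddCommGroup ((⨂[k] _ : Fin m, A) ⊗[k] (⨂[k] _ : UT m, B)))

instance (m : ℕ) : Module k (TS k A B m) :=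
  inferInstanceAs (Module k ((⨂[k] _ : Fin m, A) ⊗[k] (⨂[k] _ : UT m, B)))

/-- The secondary Hochschild cochain space `C^n(A,B,ε) = Hom_k(A^{⊗(n+1)} ⊗ B^{⊗ n(n+1)/2}, k)`. -/
abbrev Cc (n : ℕ) : Type := TS k A B (n + 1) →ₗ[k] k

/-- The pure tensor (generator) determined by diagonal entries `a` and
upper-triangular entries `β` (read at indices `< m`). -/
def gen (m : ℕ) (a : ℕ → A) (β : ℕ → ℕ → B) : TS k A B m :=
  (tprod k fun i : Fin m => a i) ⊗ₜ[k] (tprod k fun p : UT m => β p.1.1 p.1.2)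

/-- Diagonal of the matrix obtained by merging diagonal entries `i`, `i+1` via
`a_i a_{i+1} ε(b_{i,i+1})`. -/
def mergeA (ε : B →ₐ[k] A) (i : ℕ) (a : ℕ → A) (β : ℕ → ℕ → B) : ℕ → A :=
  fun j => if j < i then a j else if j = i then a i * a (i + 1) * ε (β i (i + 1)) else a (j + 1)

/-- Preimages of the index `p` under the monotone surjection collapsing `i` and `i+1`. -/
def preim (i p : ℕ) : Finset ℕ :=
  if p < i then {p} else if p = i then {i, i + 1} else {p + 1}

/-- `B`-entries of the matrix obtained by merging rows/columns `i` and `i+1`. -/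
def mergeB (i : ℕ) (β : ℕ → ℕ → B) : ℕ → ℕ → B :=
  fun p q => ∏ u ∈ preim i p, ∏ v ∈ preim i q, β u v

/-- Diagonal of the "cyclic merge": `a_m a_0 ε(b_{0,m})` in position `0`
(top index `m`). -/
def cmergeA (ε : B →ₐ[k] A) (m : ℕ) (a : ℕ → A) (β : ℕ → ℕ → B) : ℕ → A :=
  fun j => if j = 0 then a m * a 0 * ε (β 0 m) else a j

/-- `B`-entries of the cyclic merge: first row becomes `b_{q,m} b_{0,q}`. -/
def cmergeB (m : ℕ) (β : ℕ → ℕ → B) : ℕ → ℕ → B :=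
  fun p q => if p = 0 then β q m * β 0 q else β p q

/-- Diagonal of the cyclically rotated matrix: `a_n` moves to position `0`. -/
def rotA (n : ℕ) (a : ℕ → A) : ℕ → A :=
  fun j => if j = 0 then a n else a (j - 1)

/-- `B`-entries of the cyclically rotated matrix: the first row becomes
`b_{0,n}, …, b_{n-1,n}`. -/
def rotB (n : ℕ) (β : ℕ → ℕ → B) : ℕ → ℕ → B :=
  fun p q => if p = 0 then β (q - 1) n else β (p - 1) (q - 1)

/-!
STATEMENT 12: on the secondary Hochschild chains `C_n(A,B,ε) = A^{⊗(n+1)} ⊗ B^{⊗ n(n+1)/2}`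
one has `(1 − λ) ∘ b'_n = b_n ∘ (1 − λ)`, hence `b` descends to the quotient
`C_n^λ(A,B,ε) = C_n(A,B,ε)/Im(1 − λ)`.  Here `bC n, btrC n : C_{n+1} → C_n` are the full
and truncated differentials, and `lamC n` is the signed cyclic operator on `C_n`.
-/

theorem gen_congr (m : ℕ) {a a' : ℕ → A} {β β' : ℕ → ℕ → B}
    (ha : ∀ j, j < m → a j = a' j)
    (hβ : ∀ p q, p < q → q < m → β p q = β' p q) :
    gen k A B m a β = gen k A B m a' β' := by
  unfold gen
  congr 1
  · exact congrArg (PiTensorProduct.tprod k) (funext fun i => ha i.1 i.isLt)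
  · exact congrArg (PiTensorProduct.tprod k)
      (funext fun p => hβ p.1.1.1 p.1.2.1 (Fin.lt_def.mp p.2) p.1.2.isLt)

theorem prod_preim (i p : ℕ) (f : ℕ → B) :
    ∏ u ∈ preim i p, f u =
      if p < i then f p else if p = i then f i * f (i + 1) else f (p + 1) := by
  unfold preim
  split_ifs with h1 h2
  · simp
  · exact Finset.prod_pair (by omega)
  · simp

set_option maxHeartbeats 3000000 in
theorem genT0 (ε : B →ₐ[k] A) (n : ℕ) (a : ℕ → A) (β : ℕ → ℕ → B) :
    gen k A B (n + 1) (mergeA k A B ε 0 (rotA A (n + 1) a) (rotB B (n + 1) β))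
      (mergeB B 0 (rotB B (n + 1) β)) =
    gen k A B (n + 1) (cmergeA k A B ε (n + 1) a β) (cmergeB B (n + 1) β) := by
  apply gen_congr
  · intro j hj
    simp only [mergeA, rotA, rotB, cmergeA]
    split_ifs <;> first | omega | contradiction | rfl |
      (simp only [Nat.add_sub_cancel]
       try simp only [Nat.sub_add_cancel (show 1 ≤ j from by omega)]
       norm_num)
  · intro p q hpq hq
    simp only [mergeB, prod_preim, rotB, cmergeB]
    split_ifs <;> first | omega | contradiction | rfl |
      (simp only [Nat.add_sub_cancel]
       try simp only [Nat.sub_add_cancel (show 1 ≤ q from by omega)]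
       try simp only [Nat.sub_add_cancel (show 1 ≤ p from by omega)]
       try rfl
       try ring)

set_option maxHeartbeats 3000000 in
theorem genTi (ε : B →ₐ[k] A) (n i : ℕ) (hi : i < n) (a : ℕ → A) (β : ℕ → ℕ → B) :
    gen k A B (n + 1) (mergeA k A B ε (i + 1) (rotA A (n + 1) a) (rotB B (n + 1) β))
      (mergeB B (i + 1) (rotB B (n + 1) β)) =
    gen k A B (n + 1) (rotA A n (mergeA k A B ε i a β)) (rotB B n (mergeB B i β)) := by
  apply gen_congr
  · intro j hj
    simp only [mergeA, rotA, rotB]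
    split_ifs <;> first | omega | contradiction | rfl |
      (simp only [Nat.add_sub_cancel]
       try simp only [Nat.sub_add_cancel (show 1 ≤ j from by omega)]
       try rfl
       try norm_num)
  · intro p q hpq hq
    simp only [mergeB, prod_preim, rotB]
    split_ifs <;> first | omega | contradiction | rfl |
      (simp only [Nat.add_sub_cancel]
       try simp only [Nat.sub_add_cancel (show 1 ≤ q from by omega)]
       try simp only [Nat.sub_add_cancel (show 1 ≤ p from by omega)]
       try rfl
       try ring)

set_option maxHeartbeats 3000000 in
theorem genClam (ε : B →ₐ[k] A) (n : ℕ) (a : ℕ → A) (β : ℕ → ℕ → B) :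
    gen k A B (n + 1) (cmergeA k A B ε (n + 1) (rotA A (n + 1) a) (rotB B (n + 1) β))
      (cmergeB B (n + 1) (rotB B (n + 1) β)) =
    gen k A B (n + 1) (rotA A n (mergeA k A B ε n a β)) (rotB B n (mergeB B n β)) := by
  apply gen_congr
  · intro j hj
    simp only [mergeA, rotA, rotB, cmergeA]
    split_ifs <;> first | omega | contradiction | rfl |
      (simp only [Nat.add_sub_cancel]
       try simp only [Nat.sub_add_cancel (show 1 ≤ j from by omega)]
       try rfl
       try norm_num)
  · intro p q hpq hq
    simp only [mergeB, prod_preim, rotB, cmergeB]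
    split_ifs <;> first | omega | contradiction | rfl |
      (simp only [Nat.add_sub_cancel]
       try simp only [Nat.sub_add_cancel (show 1 ≤ q from by omega)]
       try simp only [Nat.sub_add_cancel (show 1 ≤ p from by omega)]
       try rfl
       try ring)

theorem gen_span (m : ℕ) (x : TS k A B m) :
    x ∈ Submodule.span k {y : TS k A B m | ∃ a β, y = gen k A B m a β} := by
  induction x using TensorProduct.induction_on with
  | zero => exact Submodule.zero_mem _
  | add x y hx hy => exact Submodule.add_mem _ hx hy
  | tmul u v =>
    induction u using PiTensorProduct.induction_on with
    | smul_tprod r f =>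
      induction v using PiTensorProduct.induction_on with
      | smul_tprod r' g =>
        set a : ℕ → A := fun j => if h : j < m then f ⟨j, h⟩ else 1 with ha
        set β : ℕ → ℕ → B := fun p q =>
          if h : p < q ∧ q < m then
            g ⟨(⟨p, h.1.trans h.2⟩, ⟨q, h.2⟩), Fin.lt_def.mpr h.1⟩ else 1 with hβ
        have hf : (PiTensorProduct.tprod k fun i : Fin m => a i.1) = PiTensorProduct.tprod k f := by
          congr 1
          funext i
          simp [ha, i.isLt]
        have hg : (PiTensorProduct.tprod k fun p : UT m => β p.1.1.1 p.1.2.1)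
            = PiTensorProduct.tprod k g := by
          congr 1
          funext p
          have h1 : (p.1.1 : ℕ) < (p.1.2 : ℕ) := Fin.lt_def.mp p.2
          have h2 : (p.1.2 : ℕ) < m := p.1.2.isLt
          simp only [hβ]
          rw [dif_pos ⟨h1, h2⟩]
        have key : (r • PiTensorProduct.tprod k f) ⊗ₜ[k] (r' • PiTensorProduct.tprod k g)
            = (r' * r) • gen k A B m a β := by
          rw [gen, hf, hg, TensorProduct.tmul_smul, ← TensorProduct.smul_tmul', smul_smul]
          rfl
        rw [key]
        exact Submodule.smul_mem _ _ (Submodule.subset_span ⟨a, β, rfl⟩)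
      | add v w hv hw =>
        rw [TensorProduct.tmul_add]
        exact Submodule.add_mem _ hv hw
    | add u w hu hw =>
      rw [TensorProduct.add_tmul]
      exact Submodule.add_mem _ hu hw

theorem sum_identity {M : Type} [AddCommGroup M] (n : ℕ) (T R : ℕ → M) (C : M) :
    (∑ i ∈ Finset.range (n + 1), (-1 : ℤ) ^ i • T i)
      - ∑ i ∈ Finset.range (n + 1), (-1 : ℤ) ^ i • ((-1 : ℤ) ^ n • R i)
    = ((∑ i ∈ Finset.range (n + 1), (-1 : ℤ) ^ i • T i)
        + (-1 : ℤ) ^ (n + 1) • C)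
      - (-1 : ℤ) ^ (n + 1) •
          ((∑ i ∈ Finset.range n, (-1 : ℤ) ^ (i + 1) • R i + C)
            + (-1 : ℤ) ^ (n + 1) • R n) := by
  have e1 : ∀ i : ℕ, (-1 : ℤ) ^ i • ((-1 : ℤ) ^ n • R i) = (-1 : ℤ) ^ (i + n) • R i := by
    intro i; rw [smul_smul, ← pow_add]
  have e2 : ∀ i : ℕ, (-1 : ℤ) ^ (n + 1) • ((-1 : ℤ) ^ (i + 1) • R i)
      = (-1 : ℤ) ^ (i + n) • R i := by
    intro i
    rw [smul_smul, ← pow_add, show n + 1 + (i + 1) = i + n + 2 from by ring, pow_add]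
    norm_num
  have e3 : (-1 : ℤ) ^ (n + 1) • ((-1 : ℤ) ^ (n + 1) • R n) = R n := by
    rw [smul_smul, ← pow_add, show n + 1 + (n + 1) = 2 * (n + 1) from by ring, pow_mul]
    norm_num
  simp only [e1, smul_add, Finset.smul_sum, e2, e3]
  rw [Finset.sum_range_succ (f := fun i => (-1 : ℤ) ^ (i + n) • R i),
    show n + n = 2 * n from by ring, pow_mul]
  norm_num
  abel


set_option maxHeartbeats 1000000 in
theorem secondary_cyclic_chains_descend
    (ε : B →ₐ[k] A) (hcent : ∀ (b : B) (a : A), ε b * a = a * ε b)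
    (lamC : ∀ n : ℕ, Module.End k (TS k A B (n + 1)))
    (hlam : ∀ (n : ℕ) (a : ℕ → A) (β : ℕ → ℕ → B),
      lamC n (gen k A B (n + 1) a β) =
        (-1 : ℤ) ^ n • gen k A B (n + 1) (rotA A n a) (rotB B n β))
    (bC : ∀ n : ℕ, TS k A B (n + 2) →ₗ[k] TS k A B (n + 1))
    (hb : ∀ (n : ℕ) (a : ℕ → A) (β : ℕ → ℕ → B),
      bC n (gen k A B (n + 2) a β) =
        (∑ i ∈ Finset.range (n + 1), (-1 : ℤ) ^ i •
            gen k A B (n + 1) (mergeA k A B ε i a β) (mergeB B i β))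
        + (-1 : ℤ) ^ (n + 1) •
            gen k A B (n + 1) (cmergeA k A B ε (n + 1) a β) (cmergeB B (n + 1) β))
    (btrC : ∀ n : ℕ, TS k A B (n + 2) →ₗ[k] TS k A B (n + 1))
    (hbtr : ∀ (n : ℕ) (a : ℕ → A) (β : ℕ → ℕ → B),
      btrC n (gen k A B (n + 2) a β) =
        ∑ i ∈ Finset.range (n + 1), (-1 : ℤ) ^ i •
            gen k A B (n + 1) (mergeA k A B ε i a β) (mergeB B i β)) :
    (∀ (n : ℕ) (x : TS k A B (n + 2)),
        btrC n x - lamC n (btrC n x) = bC n x - bC n (lamC (n + 1) x)) ∧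
    (∀ n : ℕ,
      Submodule.map (bC n) (LinearMap.range (1 - lamC (n + 1))) ≤
        LinearMap.range (1 - lamC n)) := by
  have main : ∀ (n : ℕ) (x : TS k A B (n + 2)),
      btrC n x - lamC n (btrC n x) = bC n x - bC n (lamC (n + 1) x) := by
    intro n
    have hD : ∀ x : TS k A B (n + 2),
        (btrC n - (lamC n) ∘ₗ (btrC n) - (bC n - (bC n) ∘ₗ (lamC (n + 1)))) x = 0 := by
      intro x
      induction gen_span k A B (n + 2) x using Submodule.span_induction with
      | zero => simp
      | add u v hu hv ihu ihv => rw [map_add, ihu, ihv, add_zero]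
      | smul r u hu ihu => rw [map_smul, ihu, smul_zero]
      | mem z hz =>
        obtain ⟨a, β, rfl⟩ := hz
        simp only [LinearMap.sub_apply, LinearMap.comp_apply]
        rw [sub_eq_zero]
        have hl1 : lamC (n + 1) (gen k A B (n + 2) a β)
            = (-1 : ℤ) ^ (n + 1) • gen k A B (n + 2) (rotA A (n + 1) a) (rotB B (n + 1) β) :=
          hlam (n + 1) a β
        rw [hbtr n a β, hb n a β, hl1, map_zsmul, hb n _ _]
        rw [map_sum]
        have hl2 : ∀ i ∈ Finset.range (n + 1),
            lamC n ((-1 : ℤ) ^ i •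
              gen k A B (n + 1) (mergeA k A B ε i a β) (mergeB B i β))
            = (-1 : ℤ) ^ i • ((-1 : ℤ) ^ n •
                gen k A B (n + 1) (rotA A n (mergeA k A B ε i a β))
                  (rotB B n (mergeB B i β))) := by
          intro i _
          rw [map_zsmul, hlam n]
        rw [Finset.sum_congr rfl hl2]
        rw [Finset.sum_range_succ' (f := fun i => (-1 : ℤ) ^ i •
          gen k A B (n + 1) (mergeA k A B ε i (rotA A (n + 1) a) (rotB B (n + 1) β))
            (mergeB B i (rotB B (n + 1) β)))]
        rw [genT0 k A B ε n a β, genClam k A B ε n a β]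
        have hshift : ∑ i ∈ Finset.range n, (-1 : ℤ) ^ (i + 1) •
              gen k A B (n + 1) (mergeA k A B ε (i + 1) (rotA A (n + 1) a) (rotB B (n + 1) β))
                (mergeB B (i + 1) (rotB B (n + 1) β))
            = ∑ i ∈ Finset.range n, (-1 : ℤ) ^ (i + 1) •
              gen k A B (n + 1) (rotA A n (mergeA k A B ε i a β)) (rotB B n (mergeB B i β)) :=
          Finset.sum_congr rfl (fun i hi => by
            rw [genTi k A B ε n i (Finset.mem_range.mp hi) a β])
        rw [hshift]
        rw [pow_zero, one_smul]
        exact sum_identity n _ _ _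
    intro x
    have h := hD x
    simp only [LinearMap.sub_apply, LinearMap.comp_apply] at h
    exact sub_eq_zero.mp h
  refine ⟨main, ?_⟩
  intro n y hy
  rw [Submodule.mem_map] at hy
  obtain ⟨z, hz, rfl⟩ := hy
  obtain ⟨x, rfl⟩ := LinearMap.mem_range.mp hz
  refine LinearMap.mem_range.mpr ⟨btrC n x, ?_⟩
  simp only [LinearMap.sub_apply, Module.End.one_apply, map_sub]
  exact main n x

end
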